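/- Let d ≥ 1 be an integer. There exists a constant C > 0 depending only on d such that for every t > 0, every a ∈ L¹(ℝ^d) ∩ L^∞(ℝ^d), and every x ∈ ℝ^d with x ≠ 0, one has |(g_t ⋆ a)(x)| ≤ C·‖x‖^{−d−1}·√t·‖a‖_{L¹(ℝ^d)} + ess sup_{‖y‖ ≥ ‖x‖/2} |a(y)|. -/

import Mathlib

open MeasureTheory
open scoped ENNReal

lemma keyA' (d : ℕ) : ∃ C > (0:ℝ), ∀ t r : ℝ, 0 < t → 0 < r →
    (4*Real.pi*t) ^ (-(d:ℝ)/2) * Real.exp (-(r^2/(16*t))) ≤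
      C * r ^ (-(d:ℝ)-1) * Real.sqrt t := by
  set p : ℝ := ((d:ℝ)+1)/2 with hp
  have hp0 : 0 < p := by positivity
  set F : ℝ := (Nat.factorial (d+1) : ℝ) with hF
  have hF0 : 0 < F := by rw [hF]; exact_mod_cast Nat.factorial_pos (d+1)
  have hF1 : (1:ℝ) ≤ F := by rw [hF]; exact_mod_cast Nat.one_le_iff_ne_zero.2 (Nat.factorial_ne_zero (d+1))
  have hpi : 0 < Real.pi := Real.pi_pos
  refine ⟨F * (4*Real.pi) ^ (-(d:ℝ)/2) * (16:ℝ) ^ p, by positivity, ?_⟩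
  intro t r ht hr
  set s : ℝ := r^2/(16*t) with hs
  have hs0 : 0 < s := by positivity
  have hsp : 0 < s ^ p := Real.rpow_pos_of_pos hs0 p
  -- step 1 : s^p * exp (-s) ≤ F
  have step1 : s ^ p * Real.exp (-s) ≤ F := by
    rcases le_total s 1 with h1 | h1
    · have h2 : s ^ p ≤ 1 := Real.rpow_le_one hs0.le h1 hp0.le
      have h3 : Real.exp (-s) ≤ 1 := Real.exp_le_one_iff.2 (by linarith)
      nlinarith [Real.exp_pos (-s)]
    · have h2 : s ^ p ≤ s ^ ((d:ℝ)+1) :=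
        Real.rpow_le_rpow_of_exponent_le h1 (by rw [hp]; linarith [Nat.cast_nonneg (α := ℝ) d])
      have h3 : s ^ ((d:ℝ)+1) = s ^ (d+1 : ℕ) := by
        rw [← Real.rpow_natCast s (d+1)]; push_cast; ring_nf
      have h4 : s ^ (d+1 : ℕ) ≤ F * Real.exp s := by
        have h := Real.pow_div_factorial_le_exp (x := s) hs0.le (d+1)
        rw [div_le_iff₀ hF0] at h; linarith
      calc s ^ p * Real.exp (-s) ≤ s ^ (d+1:ℕ) * Real.exp (-s) := by
            apply mul_le_mul_of_nonneg_right _ (Real.exp_pos _).le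
            rw [← h3]; exact h2
        _ ≤ (F * Real.exp s) * Real.exp (-s) :=
            mul_le_mul_of_nonneg_right h4 (Real.exp_pos _).le
        _ = F := by rw [Real.exp_neg]; field_simp
  -- step 2 : exp (-s) ≤ F * s ^ (-p)
  have step2 : Real.exp (-s) ≤ F * s ^ (-p) := by
    rw [Real.rpow_neg hs0.le]
    have h := mul_le_mul_of_nonneg_right step1 (inv_nonneg.2 hsp.le)
    calc Real.exp (-s) = s ^ p * Real.exp (-s) * (s^p)⁻¹ := by field_simp
      _ ≤ F * (s^p)⁻¹ := h
  -- algebra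
  have e1 : (4*Real.pi*t) ^ (-(d:ℝ)/2) = (4*Real.pi) ^ (-(d:ℝ)/2) * t ^ (-(d:ℝ)/2) :=
    Real.mul_rpow (by positivity) ht.le
  have e2 : s ^ (-p) = (16:ℝ)^p * t ^ p * r ^ (-(d:ℝ)-1) := by
    have a1 : s ^ (-p) = (r^2) ^ (-p) / (16*t) ^ (-p) :=
      Real.div_rpow (by positivity) (by positivity) (-p)
    have a2 : ((16*t):ℝ) ^ (-p) = (((16*t):ℝ) ^ p)⁻¹ := Real.rpow_neg (by positivity) p
    have a3 : ((16*t):ℝ) ^ p = (16:ℝ)^p * t^p := Real.mul_rpow (by norm_num) ht.le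
    have a4 : (r^2 : ℝ) ^ (-p) = r ^ (-(d:ℝ)-1) := by
      rw [← Real.rpow_natCast r 2, ← Real.rpow_mul hr.le]
      norm_num
      congr 1
      rw [hp]; ring
    rw [a1, a2, a3, a4, div_inv_eq_mul]
    ring
  have e3 : t ^ (-(d:ℝ)/2) * t ^ p = Real.sqrt t := by
    rw [← Real.rpow_add ht, Real.sqrt_eq_rpow]
    congr 1
    rw [hp]; ring
  calc (4*Real.pi*t) ^ (-(d:ℝ)/2) * Real.exp (-(r^2/(16*t)))
      ≤ (4*Real.pi) ^ (-(d:ℝ)/2) * t ^ (-(d:ℝ)/2) * (F * s ^ (-p)) := by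
        rw [e1, ← hs]
        apply mul_le_mul_of_nonneg_left step2 (by positivity)
    _ = F * (4*Real.pi) ^ (-(d:ℝ)/2) * (16:ℝ)^p * r ^ (-(d:ℝ)-1) *
          (t ^ (-(d:ℝ)/2) * t ^ p) := by rw [e2]; ring
    _ = F * (4*Real.pi) ^ (-(d:ℝ)/2) * (16:ℝ)^p * r ^ (-(d:ℝ)-1) * Real.sqrt t := by rw [e3]

lemma gauss_integrable' (d : ℕ) {b : ℝ} (hb : 0 < b) :
    Integrable (fun v : EuclideanSpace ℝ (Fin d) => Real.exp (-b * ‖v‖^2)) := by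
  have h := (GaussianFourier.integrable_cexp_neg_mul_sq_norm_add
      (V := EuclideanSpace ℝ (Fin d)) (b := (b:ℂ)) (by simpa using hb) 0 0).re
  apply h.congr
  filter_upwards with v
  have h2 : (-(b:ℂ) * (‖v‖:ℂ)^2 + 0 * ((inner ℝ (0 : EuclideanSpace ℝ (Fin d)) v : ℝ) : ℂ))
      = ((-b * ‖v‖^2 : ℝ) : ℂ) := by push_cast; ring
  rw [h2, ← Complex.ofReal_exp]
  exact Complex.ofReal_re _

lemma gauss_integral' (d : ℕ) {b : ℝ} (hb : 0 < b) :
    ∫ v : EuclideanSpace ℝ (Fin d), Real.exp (-b * ‖v‖^2) = (Real.pi / b) ^ ((d:ℝ)/2) := by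
  rw [GaussianFourier.integral_rexp_neg_mul_sq_norm hb]
  norm_num [finrank_euclideanSpace_fin]

/-- There is `C > 0` depending only on `d` such that for every `t > 0`,
every `a ∈ L¹ ∩ L^∞` and every `x ≠ 0`,
`|(g_t ⋆ a)(x)| ≤ C ‖x‖^{−d−1} √t ‖a‖_{L¹} + ess sup_{‖y‖ ≥ ‖x‖/2} |a(y)|`,
where `g_t(x) = (4πt)^{−d/2} exp(−‖x‖²/(4t))` and the essential supremum is the
`L^∞` norm of `a` on the set `{‖y‖ ≥ ‖x‖/2}` (stated in `ℝ≥0∞`). -/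
theorem stmt8 (d : ℕ) (hd : 1 ≤ d) :
    ∃ C > (0 : ℝ), ∀ t : ℝ, 0 < t →
      ∀ a : EuclideanSpace ℝ (Fin d) → ℝ, Integrable a → MemLp a ⊤ volume →
      ∀ x : EuclideanSpace ℝ (Fin d), x ≠ 0 →
        ENNReal.ofReal
            |∫ y, (4 * Real.pi * t) ^ (-(d : ℝ) / 2) * Real.exp (-‖x - y‖ ^ 2 / (4 * t)) * a y| ≤
          ENNReal.ofReal (C * ‖x‖ ^ (-(d : ℝ) - 1) * Real.sqrt t * ∫ y, |a y|) +
            eLpNorm a ⊤ (volume.restrict {y : EuclideanSpace ℝ (Fin d) | ‖x‖ / 2 ≤ ‖y‖}) := by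
  obtain ⟨C, hC, hkey⟩ := keyA' d
  refine ⟨C, hC, ?_⟩
  intro t ht a ha hainf x hx
  have hx0 : 0 < ‖x‖ := norm_pos_iff.2 hx
  have hpi := Real.pi_pos
  set c : ℝ := (4 * Real.pi * t) ^ (-(d:ℝ)/2) with hc
  have hc0 : 0 < c := Real.rpow_pos_of_pos (by positivity) _
  set K : EuclideanSpace ℝ (Fin d) → ℝ := fun y => c * Real.exp (-‖x - y‖ ^ 2 / (4 * t)) with hK
  have hKpos : ∀ y, 0 < K y := fun y => by positivity
  have hKle : ∀ y, K y ≤ c := fun y => by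
    rw [hK]
    have h1 : Real.exp (-‖x - y‖ ^ 2 / (4 * t)) ≤ 1 := by
      rw [Real.exp_le_one_iff, neg_div]
      have h0 : (0:ℝ) ≤ ‖x - y‖^2 / (4*t) := by positivity
      linarith
    nlinarith
  -- continuity of K
  have hKcont : Continuous K := by
    apply continuous_const.mul
    exact (Real.continuous_exp.comp (by fun_prop))
  -- integrability of K
  have hb : (0:ℝ) < 1 / (4 * t) := by positivity
  have hKint : Integrable K := by
    have h1 : Integrable (fun v : EuclideanSpace ℝ (Fin d) => Real.exp (-(1/(4*t)) * ‖v‖^2)) := gauss_integrable' d hb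
    have h2 : Integrable (fun y : EuclideanSpace ℝ (Fin d) => Real.exp (-(1/(4*t)) * ‖x - y‖^2)) :=
      h1.comp_sub_left x
    apply (h2.const_mul c).congr
    filter_upwards with y
    rw [hK]
    congr 1
    field_simp
  have hKtot : ∫ y, K y = 1 := by
    rw [hK, MeasureTheory.integral_const_mul]
    have h1 : ∀ y : EuclideanSpace ℝ (Fin d), Real.exp (-‖x - y‖ ^ 2 / (4 * t))
        = (fun v : EuclideanSpace ℝ (Fin d) => Real.exp (-(1/(4*t)) * ‖v‖^2)) (x - y) := by
      intro y; simp only; congr 1; field_simp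
    simp_rw [h1]
    rw [MeasureTheory.integral_sub_left_eq_self (fun v : EuclideanSpace ℝ (Fin d) => Real.exp (-(1/(4*t)) * ‖v‖^2))
      volume x, gauss_integral' d hb]
    rw [hc]
    have h2 : Real.pi / (1/(4*t)) = 4 * Real.pi * t := by field_simp
    rw [h2, ← Real.rpow_add (by positivity),
      show (-(d:ℝ)/2 + (d:ℝ)/2) = 0 by ring, Real.rpow_zero]
  -- the integrand
  set f : EuclideanSpace ℝ (Fin d) → ℝ := fun y => c * Real.exp (-‖x - y‖ ^ 2 / (4 * t)) * a y with hf
  have hfK : ∀ y, f y = K y * a y := fun y => rfl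
  have hfint : Integrable f := by
    refine Integrable.mono' (g := fun y => c * |a y|) (ha.abs.const_mul c) ?_ ?_
    · exact hKcont.aestronglyMeasurable.mul ha.1
    filter_upwards with y
    rw [hfK, Real.norm_eq_abs, abs_mul, abs_of_pos (hKpos y)]
    exact mul_le_mul_of_nonneg_right (hKle y) (abs_nonneg _)
  set S : Set (EuclideanSpace ℝ (Fin d)) := {y : EuclideanSpace ℝ (Fin d) | ‖x‖ / 2 ≤ ‖y‖} with hSdef
  have hS : MeasurableSet S := measurableSet_le measurable_const measurable_norm
  -- splitting
  have hsplit : ∫ y, f y = (∫ y in S, f y) + ∫ y in Sᶜ, f y :=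
    (MeasureTheory.integral_add_compl hS hfint).symm
  -- near bound
  set M : ℝ := C * ‖x‖ ^ (-(d:ℝ)-1) * Real.sqrt t with hM
  have hM0 : 0 < M := by
    rw [hM]
    exact mul_pos (mul_pos hC (Real.rpow_pos_of_pos hx0 (-(d:ℝ)-1))) (Real.sqrt_pos.2 ht)
  have hKnear : ∀ y ∈ Sᶜ, K y ≤ M := by
    intro y hy
    have hy' : ‖y‖ < ‖x‖ / 2 := by
      simpa [hSdef] using hy
    have h1 : ‖x‖ / 2 ≤ ‖x - y‖ := by
      have h := norm_add_le (x - y) y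
      rw [sub_add_cancel] at h
      linarith
    have h2 : Real.exp (-‖x - y‖ ^ 2 / (4 * t)) ≤ Real.exp (-(‖x‖^2/(16*t))) := by
      apply Real.exp_le_exp.2
      rw [div_le_iff₀ (by positivity : (0:ℝ) < 4*t)]
      have h3 : ‖x‖^2/4 ≤ ‖x - y‖^2 := by
        have := pow_le_pow_left₀ (by positivity : (0:ℝ) ≤ ‖x‖/2) h1 2
        nlinarith
      have h5 : -(‖x‖ ^ 2 / (16 * t)) * (4 * t) = -(‖x‖^2/4) := by field_simp; ring
      rw [h5]
      linarith
    calc K y ≤ c * Real.exp (-(‖x‖^2/(16*t))) := by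
          rw [hK]; exact mul_le_mul_of_nonneg_left h2 hc0.le
      _ ≤ M := hkey t ‖x‖ ht hx0
  have hnear : |∫ y in Sᶜ, f y| ≤ M * ∫ y, |a y| := by
    calc |∫ y in Sᶜ, f y| ≤ ∫ y in Sᶜ, |f y| := by
          simpa using norm_integral_le_integral_norm (μ := volume.restrict Sᶜ) f
      _ ≤ ∫ y in Sᶜ, M * |a y| := by
          apply setIntegral_mono_on hfint.abs.integrableOn
            ((ha.abs.const_mul M).integrableOn) hS.compl
          intro y hy
          rw [hfK, abs_mul, abs_of_pos (hKpos y)]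
          exact mul_le_mul_of_nonneg_right (hKnear y hy) (abs_nonneg _)
      _ ≤ ∫ y, M * |a y| := by
          apply setIntegral_le_integral (ha.abs.const_mul M)
          filter_upwards with y
          positivity
      _ = M * ∫ y, |a y| := MeasureTheory.integral_const_mul M _
  -- far bound
  set SN : ℝ≥0∞ := eLpNorm a ⊤ (volume.restrict S) with hSN
  have hSNfin : SN ≠ ∞ := by
    have h1 : SN ≤ eLpNorm a ⊤ volume := eLpNorm_mono_measure a Measure.restrict_le_self
    exact (h1.trans_lt hainf.2).ne
  set s0 : ℝ := SN.toReal with hs0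
  have hs0nn : 0 ≤ s0 := ENNReal.toReal_nonneg
  have haebd : ∀ᵐ y ∂(volume.restrict S), |a y| ≤ s0 := by
    have h := MeasureTheory.enorm_ae_le_eLpNormEssSup a (volume.restrict S)
    filter_upwards [h] with y hy
    have h2 : (‖a y‖₊ : ℝ≥0∞) ≤ SN := by
      rw [hSN, eLpNorm_exponent_top]; exact hy
    have h3 := ENNReal.toReal_mono hSNfin h2
    simpa using h3
  have hfar : |∫ y in S, f y| ≤ s0 := by
    calc |∫ y in S, f y| ≤ ∫ y in S, |f y| := by
          simpa using norm_integral_le_integral_norm (μ := volume.restrict S) f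
      _ ≤ ∫ y in S, K y * s0 := by
          apply integral_mono_ae hfint.abs.integrableOn
            ((hKint.mul_const s0).integrableOn)
          filter_upwards [haebd] with y hy
          rw [hfK, abs_mul, abs_of_pos (hKpos y)]
          exact mul_le_mul_of_nonneg_left hy (hKpos y).le
      _ = (∫ y in S, K y) * s0 := by rw [MeasureTheory.integral_mul_const]
      _ ≤ 1 * s0 := by
          apply mul_le_mul_of_nonneg_right _ hs0nn
          rw [← hKtot]
          apply setIntegral_le_integral hKint
          filter_upwards with y; exact (hKpos y).le
      _ = s0 := one_mul s0
  -- combine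
  have hcomb : |∫ y, f y| ≤ M * (∫ y, |a y|) + s0 := by
    rw [hsplit]
    calc |(∫ y in S, f y) + ∫ y in Sᶜ, f y| ≤ |∫ y in Sᶜ, f y| + |∫ y in S, f y| := by
          rw [add_comm]; exact abs_add_le _ _
      _ ≤ M * (∫ y, |a y|) + s0 := add_le_add hnear hfar
  calc ENNReal.ofReal |∫ y, f y| ≤ ENNReal.ofReal (M * (∫ y, |a y|) + s0) :=
        ENNReal.ofReal_le_ofReal hcomb
    _ ≤ ENNReal.ofReal (M * (∫ y, |a y|)) + ENNReal.ofReal s0 := ENNReal.ofReal_add_le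
    _ ≤ ENNReal.ofReal (C * ‖x‖ ^ (-(d : ℝ) - 1) * Real.sqrt t * ∫ y, |a y|) + SN := by
        apply add_le_add
        · rw [hM]
        · rw [hs0]; exact ENNReal.ofReal_toReal_le
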